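/- Let X be a normal topological space, F a closed subspace of X, and Y a Euclidean neighborhood retract, i.e., there exist a natural number m, an open subset U of ℝᵐ, a topological embedding e : Y → ℝᵐ with image contained in U, and a continuous map r : U → Y with r(e(y)) = y for all y ∈ Y. Suppose f₀ : F → Y and g : X → Y are continuous maps such that f₀ is homotopic to the restriction g|_F of g to F. Then there exists a continuous map f : X → Y such that f|_F = f₀ and f is homotopic to g. -/

import Mathlib

open scoped unitInterval
open Metric Set Filter Topology

noncomputable section
namespace HEPaux
/-- Coordinate of a path. -/
def coord {m : ℕ} (i : Fin m) (q : C(I, Fin m → ℝ)) : C(I, ℝ) :=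
  ⟨fun t => q t i, (continuous_apply i).comp q.continuous⟩

/-- A "Bernstein path" with vector coefficients. -/
def bpath {m : ℕ} (n : ℕ) (a : Fin (n + 1) → Fin m → ℝ) : C(I, Fin m → ℝ) :=
  ⟨fun t => ∑ k : Fin (n + 1), bernstein n k t • a k, by
    apply continuous_finset_sum
    intro k _
    exact ((bernstein n k).continuous).smul continuous_const⟩

@[simp] lemma bpath_apply {m : ℕ} (n : ℕ) (a : Fin (n + 1) → Fin m → ℝ) (t : I) :
    bpath n a t = ∑ k : Fin (n + 1), bernstein n k t • a k := rfl

lemma continuous_bpath {X : Type*} [TopologicalSpace X] {m : ℕ} (n : ℕ)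
    (a : Fin (n + 1) → X → Fin m → ℝ) (ha : ∀ k, Continuous (a k)) :
    Continuous fun x => bpath n (fun k => a k x) := by
  apply ContinuousMap.continuous_of_continuous_uncurry
  have : (Function.uncurry fun (x : X) (t : I) => (bpath n fun k => a k x) t)
      = fun p : X × I => ∑ k : Fin (n + 1), bernstein n k p.2 • a k p.1 := rfl
  rw [this]
  apply continuous_finset_sum
  intro k _
  exact ((bernstein n k).continuous.comp continuous_snd).smul ((ha k).comp continuous_fst)

lemma norm_bern_sum_le {m : ℕ} {n : ℕ} (t : I) (a : Fin (n + 1) → Fin m → ℝ) {C : ℝ}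
    (hC : 0 ≤ C) (ha : ∀ k, ‖a k‖ ≤ C) : ‖∑ k : Fin (n + 1), bernstein n k t • a k‖ ≤ C := by
  rw [pi_norm_le_iff_of_nonneg hC]
  intro i
  have h1 : (∑ k : Fin (n + 1), bernstein n k t • a k) i = ∑ k : Fin (n + 1), bernstein n k t * a k i := by
    simp [Finset.sum_apply]
  rw [h1, Real.norm_eq_abs]
  calc |∑ k : Fin (n + 1), bernstein n k t * a k i| ≤ ∑ k : Fin (n + 1), |bernstein n k t * a k i| :=
        Finset.abs_sum_le_sum_abs _ _
    _ ≤ ∑ k : Fin (n + 1), bernstein n k t * C := by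
        refine Finset.sum_le_sum fun k _ => ?_
        rw [abs_mul, abs_of_nonneg bernstein_nonneg]
        refine mul_le_mul_of_nonneg_left ?_ bernstein_nonneg
        have h2 : |a k i| ≤ ‖a k‖ := (Real.norm_eq_abs (a k i)) ▸ norm_le_pi_norm (a k) i
        exact h2.trans (ha k)
    _ = C := by rw [← Finset.sum_mul, bernstein.probability, one_mul]

lemma norm_bpath_le {m : ℕ} {n : ℕ} (a : Fin (n + 1) → Fin m → ℝ) {C : ℝ}
    (hC : 0 ≤ C) (ha : ∀ k, ‖a k‖ ≤ C) : ‖bpath n a‖ ≤ C := by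
  rw [ContinuousMap.norm_le _ hC]
  intro t
  exact norm_bern_sum_le t a hC ha

lemma bpath_at_zero {m : ℕ} (n : ℕ) (a : Fin (n + 1) → Fin m → ℝ) (h0 : a 0 = 0) :
    bpath n a 0 = 0 := by
  rw [bpath_apply]
  apply Finset.sum_eq_zero
  intro k _
  by_cases hk : (k : ℕ) = 0
  · have : k = 0 := Fin.ext hk
    simp [this, h0]
  · have : bernstein n k (0 : I) = 0 := by
      rw [bernstein_apply]
      simp [zero_pow hk]
    simp [this]

lemma bpath_at_one {m : ℕ} (n : ℕ) (a : Fin (n + 1) → Fin m → ℝ) (h1 : a (Fin.last n) = 0) :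
    bpath n a 1 = 0 := by
  rw [bpath_apply]
  apply Finset.sum_eq_zero
  intro k _
  by_cases hk : (k : ℕ) = n
  · have : k = Fin.last n := Fin.ext hk
    simp [this, h1]
  · have hlt : (k : ℕ) < n := lt_of_le_of_ne (Nat.lt_succ_iff.mp k.isLt) hk
    have : bernstein n k (1 : I) = 0 := by
      rw [bernstein_apply]
      simp [zero_pow (Nat.sub_ne_zero_of_lt hlt)]
    simp [this]

lemma bpath_smul {m : ℕ} (n : ℕ) (a : Fin (n + 1) → Fin m → ℝ) (c : ℝ) :
    bpath n (fun k => c • a k) = c • bpath n a := by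
  ext t
  simp only [bpath_apply, ContinuousMap.smul_apply, Finset.smul_sum, Finset.sum_apply,
    Pi.smul_apply, smul_eq_mul]
  rw [Finset.mul_sum]
  refine Finset.sum_congr rfl fun k _ => ?_
  ring

/-- coordinatewise clamp to `[-1, 1]`. -/
def clamp {m : ℕ} (v : Fin m → ℝ) : Fin m → ℝ := fun i => max (-1) (min 1 (v i))

lemma continuous_clamp {m : ℕ} : Continuous (clamp (m := m)) := by
  apply continuous_pi
  intro i
  exact continuous_const.max (continuous_const.min (continuous_apply i))

lemma norm_clamp_le {m : ℕ} (v : Fin m → ℝ) : ‖clamp v‖ ≤ 1 := by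
  rw [pi_norm_le_iff_of_nonneg zero_le_one]
  intro i
  rw [Real.norm_eq_abs, abs_le]
  constructor
  · exact le_max_left _ _
  · exact max_le (by norm_num) (min_le_left _ _)

lemma clamp_eq_self {m : ℕ} (v : Fin m → ℝ) (hv : ‖v‖ ≤ 1) : clamp v = v := by
  funext i
  have h := (Real.norm_eq_abs _) ▸ (norm_le_pi_norm v i).trans hv
  rw [abs_le] at h
  simp [clamp, min_eq_right h.2, max_eq_right, h.1]


/-- the sample coefficients of a path, with endpoints forced to `0`. -/
def samples {m : ℕ} (n : ℕ) (q : C(I, Fin m → ℝ)) (k : Fin (n + 1)) : Fin m → ℝ :=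
  if (k : ℕ) = 0 ∨ (k : ℕ) = n then 0 else q (bernstein.z k)

lemma norm_samples_le {m : ℕ} (n : ℕ) (q : C(I, Fin m → ℝ)) (k : Fin (n + 1)) :
    ‖samples n q k‖ ≤ ‖q‖ := by
  rw [samples]
  split
  · simpa using norm_nonneg q
  · exact q.norm_coe_le_norm _

lemma samples_zero {m : ℕ} (n : ℕ) (q : C(I, Fin m → ℝ)) : samples n q 0 = 0 := by
  simp [samples]

lemma samples_last {m : ℕ} (n : ℕ) (q : C(I, Fin m → ℝ)) : samples n q (Fin.last n) = 0 := by
  simp [samples]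

lemma samples_eq {m : ℕ} (n : ℕ) (q : C(I, Fin m → ℝ)) (hq0 : q 0 = 0) (hq1 : q 1 = 0)
    (k : Fin (n + 1)) : samples n q k = q (bernstein.z k) := by
  rw [samples]
  split
  · rename_i hk
    rcases hk with hk | hk
    · have hz : bernstein.z k = 0 := by
        apply Subtype.ext
        simp [bernstein.z, hk]
      rw [hz, hq0]
    · by_cases hn : n = 0
      · have hz : bernstein.z k = 0 := by
          apply Subtype.ext
          simp [bernstein.z, hn]
        rw [hz, hq0]
      · have hz : bernstein.z k = 1 := by
          apply Subtype.ext
          simp [bernstein.z, hk]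
          exact_mod_cast hn
        rw [hz, hq1]
  · rfl

lemma coord_bpath_samples {m : ℕ} (n : ℕ) (q : C(I, Fin m → ℝ)) (hq0 : q 0 = 0) (hq1 : q 1 = 0)
    (i : Fin m) (t : I) :
    bpath n (samples n q) t i = bernsteinApproximation n (coord i q) t := by
  rw [bernsteinApproximation.apply, bpath_apply]
  rw [Finset.sum_apply]
  refine Finset.sum_congr rfl fun k _ => ?_
  rw [samples_eq n q hq0 hq1 k]
  simp [coord, mul_comm]

lemma dist_bpath_samples_le {m : ℕ} (n : ℕ) (q : C(I, Fin m → ℝ)) (hq0 : q 0 = 0) (hq1 : q 1 = 0) :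
    dist (bpath n (samples n q)) q
      ≤ ∑ i : Fin m, dist (bernsteinApproximation n (coord i q)) (coord i q) := by
  have hnn : (0:ℝ) ≤ ∑ i : Fin m, dist (bernsteinApproximation n (coord i q)) (coord i q) :=
    Finset.sum_nonneg fun i _ => dist_nonneg
  rw [ContinuousMap.dist_le hnn]
  intro t
  rw [dist_pi_le_iff hnn]
  intro i
  have h1 : bpath n (samples n q) t i = bernsteinApproximation n (coord i q) t :=
    coord_bpath_samples n q hq0 hq1 i t
  have h2 : q t i = coord i q t := rfl
  rw [h1, h2]
  calc dist (bernsteinApproximation n (coord i q) t) (coord i q t)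
      ≤ dist (bernsteinApproximation n (coord i q)) (coord i q) :=
        ContinuousMap.dist_apply_le_dist t
    _ ≤ _ := Finset.single_le_sum (f := fun j => dist (bernsteinApproximation n (coord j q)) (coord j q)) (fun j _ => dist_nonneg) (Finset.mem_univ i)

lemma tendsto_dist_bpath_samples {m : ℕ} (q : C(I, Fin m → ℝ)) (hq0 : q 0 = 0) (hq1 : q 1 = 0) :
    Tendsto (fun n => dist (bpath n (samples n q)) q) atTop (𝓝 0) := by
  have hbound : Tendsto
      (fun n => ∑ i : Fin m, dist (bernsteinApproximation n (coord i q)) (coord i q))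
      atTop (𝓝 0) := by
    have h0 : (𝓝 (0:ℝ)) = 𝓝 (∑ i : Fin m, (0:ℝ)) := by simp
    rw [h0]
    apply tendsto_finset_sum
    intro i _
    have h1 := (bernsteinApproximation_uniform (coord i q)).dist
      (tendsto_const_nhds (x := coord i q) (f := atTop))
    simpa using h1
  exact squeeze_zero (fun n => dist_nonneg) (fun n => dist_bpath_samples_le n q hq0 hq1) hbound


lemma norm_smul_cm {m : ℕ} (c : ℝ) (p : C(I, Fin m → ℝ)) : ‖c • p‖ = |c| * ‖p‖ := by
  have h := norm_smul c p
  rwa [Real.norm_eq_abs] at h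

set_option maxHeartbeats 1000000 in
/-- Approximate Tietze extension into the path space `C(I, ℝᵐ)`, with endpoint control. -/
lemma approx_ext {X : Type*} [TopologicalSpace X] [NormalSpace X] {F : Set X} (hF : IsClosed F)
    {m : ℕ} (Φ : C(F, C(I, Fin m → ℝ)))
    (hΦ0 : ∀ x, Φ x 0 = 0) (hΦ1 : ∀ x, Φ x 1 = 0)
    (δ : C(F, ℝ)) (hδ : ∀ x, 0 < δ x) :
    ∃ c : C(X, C(I, Fin m → ℝ)),
      (∀ x, c x 0 = 0) ∧ (∀ x, c x 1 = 0) ∧ ∀ x : F, dist (c x) (Φ x) ≤ δ x := by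
  classical
  -- extended sample coefficients
  have hex : ∀ (n : ℕ) (k : Fin (n + 1)), ∃ Ek : C(X, Fin m → ℝ),
      (∀ x : F, Ek x = samples n (Φ x) k) ∧ (((k : ℕ) = 0 ∨ (k : ℕ) = n) → Ek = 0) := by
    intro n k
    by_cases hk : (k : ℕ) = 0 ∨ (k : ℕ) = n
    · refine ⟨0, fun x => ?_, fun _ => rfl⟩
      rw [samples, if_pos hk]; rfl
    · obtain ⟨Ek, hEk⟩ := ContinuousMap.exists_restrict_eq (Y := Fin m → ℝ) hF
        ⟨fun x => Φ x (bernstein.z k), (continuous_eval_const _).comp Φ.continuous⟩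
      refine ⟨Ek, fun x => ?_, fun h => absurd h hk⟩
      have h1 : Ek.restrict F x = Φ x (bernstein.z k) := by rw [hEk]; rfl
      rw [ContinuousMap.restrict_apply] at h1
      rw [h1, samples, if_neg hk]
  choose Ext hExtF hExt0 using hex
  -- extended norm bound
  obtain ⟨Mr, hMr⟩ := ContinuousMap.exists_restrict_eq (Y := ℝ) hF
    ⟨fun x => ‖Φ x‖, continuous_norm.comp Φ.continuous⟩
  set Mp : X → ℝ := fun x => max 0 (Mr x) + 1 with hMp_def
  have hMp_cont : Continuous Mp := (continuous_const.max (Mr.continuous)).add continuous_const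
  have hMp_pos : ∀ x, 0 < Mp x := fun x =>
    lt_of_lt_of_le one_pos (le_add_of_nonneg_left (le_max_left _ _))
  have hMpF : ∀ x : F, Mp x = ‖Φ x‖ + 1 := by
    intro x
    have h1 : Mr.restrict F x = ‖Φ x‖ := by rw [hMr]; rfl
    rw [ContinuousMap.restrict_apply] at h1
    simp [hMp_def, h1, max_eq_right (norm_nonneg (Φ x))]
  have hMpF_le : ∀ x : F, ‖Φ x‖ ≤ Mp x := fun x => by
    rw [hMpF x]; linarith
  -- normalized clamped coefficients
  set a : ∀ n : ℕ, Fin (n + 1) → X → Fin m → ℝ :=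
    fun n k x => clamp ((Mp x)⁻¹ • Ext n k x) with ha_def
  have ha_cont : ∀ n k, Continuous (a n k) := fun n k =>
    continuous_clamp.comp ((hMp_cont.inv₀ fun x => (hMp_pos x).ne').smul (Ext n k).continuous)
  have ha_norm : ∀ n k x, ‖a n k x‖ ≤ 1 := fun n k x => norm_clamp_le _
  have ha_ends : ∀ (n : ℕ) (k : Fin (n + 1)), ((k : ℕ) = 0 ∨ (k : ℕ) = n) → ∀ x, a n k x = 0 := by
    intro n k hk x
    rw [ha_def]
    simp only [hExt0 n k hk]
    funext i
    simp [clamp]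
  -- on F : identity with the true normalized Bernstein path
  have haF : ∀ (n : ℕ) (k : Fin (n + 1)) (x : F),
      a n k x = (Mp x)⁻¹ • samples n (Φ x) k := by
    intro n k x
    rw [ha_def]
    simp only [hExtF n k x]
    apply clamp_eq_self
    rw [norm_smul, Real.norm_eq_abs, abs_of_pos (by positivity : (0:ℝ) < (Mp (x:X))⁻¹),
      ← div_eq_inv_mul]
    apply div_le_one_of_le₀
    · exact (norm_samples_le n (Φ x) k).trans (hMpF_le x)
    · exact (hMp_pos _).le
  -- the Bernstein paths
  set D : ℕ → X → C(I, Fin m → ℝ) := fun n x => bpath n (fun k => a n k x) with hD_def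
  have hD_cont : ∀ n, Continuous (D n) := fun n => continuous_bpath n _ (ha_cont n)
  have hD_norm : ∀ n x, ‖D n x‖ ≤ 1 := fun n x =>
    norm_bpath_le _ zero_le_one (fun k => ha_norm n k x)
  have hD_zero : ∀ n x, D n x 0 = 0 := fun n x =>
    bpath_at_zero n _ (ha_ends n 0 (Or.inl rfl) x)
  have hD_one : ∀ n x, D n x 1 = 0 := fun n x =>
    bpath_at_one n _ (ha_ends n (Fin.last n) (Or.inr (by simp)) x)
  have hDF : ∀ (n : ℕ) (x : F), D n x = (Mp x)⁻¹ • bpath n (samples n (Φ x)) := by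
    intro n x
    rw [hD_def]
    simp only [haF n _ x]
    exact bpath_smul n _ _
  -- the error functions on F
  set ε : ℕ → F → ℝ := fun n x => dist (bpath n (samples n (Φ x))) (Φ x) with hε_def
  have hε_cont : ∀ n, Continuous (ε n) := by
    intro n
    have hrw : ε n = fun x : F => dist ((Mp (x : X)) • D n (x : X)) (Φ x) := by
      funext x
      rw [hε_def]
      have : (Mp (x : X)) • D n (x : X) = bpath n (samples n (Φ x)) := by
        rw [hDF n x, smul_smul, mul_inv_cancel₀ (hMp_pos _).ne', one_smul]
      rw [this]
    rw [hrw]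
    exact Continuous.dist
      ((hMp_cont.comp continuous_subtype_val).smul ((hD_cont n).comp continuous_subtype_val))
      Φ.continuous
  have hε_tendsto : ∀ x : F, Tendsto (fun n => ε n x) atTop (𝓝 0) := fun x =>
    tendsto_dist_bpath_samples (Φ x) (hΦ0 x) (hΦ1 x)
  -- weights on F
  set w : ℕ → F → ℝ := fun n x => min 1 (max 0 (δ x - ε n x)) with hw_def
  have hw_cont : ∀ n, Continuous (w n) := fun n =>
    continuous_const.min (continuous_const.max (δ.continuous.sub (hε_cont n)))
  have hw_mem : ∀ n x, w n x ∈ Icc (0:ℝ) 1 :=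
    fun n x => ⟨le_min zero_le_one (le_max_left _ _), min_le_left _ _⟩
  have hw_pos_imp : ∀ n x, 0 < w n x → ε n x ≤ δ x := by
    intro n x hpos
    by_contra hlt
    push_neg at hlt
    have : max 0 (δ x - ε n x) = 0 := max_eq_left (by linarith)
    rw [hw_def] at hpos
    simp only [this, min_eq_right (zero_le_one)] at hpos
    exact lt_irrefl 0 hpos
  have hw_exists : ∀ x : F, ∃ n, 0 < w n x := by
    intro x
    obtain ⟨n, hn⟩ := ((hε_tendsto x).eventually_lt_const (hδ x)).exists
    refine ⟨n, lt_min one_pos (lt_max_of_lt_right (by linarith))⟩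
  -- the normalization on F
  have hgeo : Summable (fun n : ℕ => (1/2 : ℝ)^n) := summable_geometric_two
  have hsummw : ∀ x : F, Summable (fun n => (1/2 : ℝ)^n * w n x) := by
    intro x
    refine Summable.of_nonneg_of_le (fun n => ?_) (fun n => ?_) hgeo
    · exact mul_nonneg (by positivity) (hw_mem n x).1
    · calc (1/2 : ℝ)^n * w n x ≤ (1/2 : ℝ)^n * 1 :=
            mul_le_mul_of_nonneg_left (hw_mem n x).2 (by positivity)
        _ = (1/2 : ℝ)^n := mul_one _
  set sF : F → ℝ := fun x => ∑' n, (1/2 : ℝ)^n * w n x with hsF_def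
  have hsF_pos : ∀ x, 0 < sF x := by
    intro x
    obtain ⟨n, hn⟩ := hw_exists x
    exact Summable.tsum_pos (hsummw x)
      (fun k => mul_nonneg (by positivity) (hw_mem k x).1) n
      (mul_pos (by positivity) hn)
  have hsF_cont : Continuous sF := by
    apply continuous_tsum (u := fun n : ℕ => (1/2 : ℝ)^n)
      (fun n => continuous_const.mul (hw_cont n)) hgeo
    intro n x
    simp only [Pi.mul_apply]
    rw [Real.norm_eq_abs, abs_mul, abs_of_nonneg (by positivity : (0:ℝ) ≤ (1/2:ℝ)^n),
      abs_of_nonneg (hw_mem n x).1]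
    calc (1/2 : ℝ)^n * w n x ≤ (1/2 : ℝ)^n * 1 :=
          mul_le_mul_of_nonneg_left (hw_mem n x).2 (by positivity)
      _ = (1/2 : ℝ)^n := mul_one _
  -- extensions of the weights and of the normalization
  have hexw : ∀ n : ℕ, ∃ Wc : C(X, ℝ), ∀ x : F, Wc x = w n x := by
    intro n
    obtain ⟨Wc, hWc⟩ := ContinuousMap.exists_restrict_eq (Y := ℝ) hF ⟨w n, hw_cont n⟩
    refine ⟨Wc, fun x => ?_⟩
    have h1 : Wc.restrict F x = w n x := by rw [hWc]; rfl
    rwa [ContinuousMap.restrict_apply] at h1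
  choose Wraw hWraw using hexw
  set W : ℕ → X → ℝ := fun n x => min 1 (max 0 (Wraw n x)) with hW_def
  have hW_cont : ∀ n, Continuous (W n) := fun n =>
    continuous_const.min (continuous_const.max (Wraw n).continuous)
  have hW_mem : ∀ n x, W n x ∈ Icc (0:ℝ) 1 :=
    fun n x => ⟨le_min zero_le_one (le_max_left _ _), min_le_left _ _⟩
  have hWF : ∀ (n : ℕ) (x : F), W n x = w n x := by
    intro n x
    rw [hW_def]
    simp only [hWraw n x]
    rw [max_eq_right (hw_mem n x).1, min_eq_right (hw_mem n x).2]
  obtain ⟨P, hP⟩ := ContinuousMap.exists_restrict_eq (Y := ℝ) hF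
    ⟨fun x => (sF x)⁻¹, hsF_cont.inv₀ fun x => (hsF_pos x).ne'⟩
  have hPF : ∀ x : F, P x = (sF x)⁻¹ := by
    intro x
    have h1 : P.restrict F x = (sF x)⁻¹ := by rw [hP]; rfl
    rwa [ContinuousMap.restrict_apply] at h1
  -- the global series
  have hsumT : ∀ x : X, Summable (fun n => ((1/2 : ℝ)^n * W n x) • D n x) := by
    intro x
    apply Summable.of_norm_bounded hgeo
    intro n
    rw [norm_smul_cm, abs_mul, abs_of_nonneg (by positivity : (0:ℝ) ≤ (1/2:ℝ)^n),
      abs_of_nonneg (hW_mem n x).1]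
    calc (1/2:ℝ)^n * W n x * ‖D n x‖ ≤ (1/2:ℝ)^n * 1 * 1 := by
          apply mul_le_mul (mul_le_mul_of_nonneg_left (hW_mem n x).2 (by positivity))
            (hD_norm n x) (norm_nonneg _)
          positivity
      _ = (1/2:ℝ)^n := by ring
  set T : X → C(I, Fin m → ℝ) := fun x => ∑' n, ((1/2 : ℝ)^n * W n x) • D n x with hT_def
  have hT_cont : Continuous T := by
    apply continuous_tsum (u := fun n : ℕ => (1/2 : ℝ)^n)
      (fun n => (continuous_const.mul (hW_cont n)).smul (hD_cont n)) hgeo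
    intro n x
    show ‖((1/2:ℝ)^n * W n x) • D n x‖ ≤ (1/2:ℝ)^n
    rw [norm_smul_cm, abs_mul, abs_of_nonneg (by positivity : (0:ℝ) ≤ (1/2:ℝ)^n),
      abs_of_nonneg (hW_mem n x).1]
    calc (1/2:ℝ)^n * W n x * ‖D n x‖ ≤ (1/2:ℝ)^n * 1 * 1 := by
          apply mul_le_mul (mul_le_mul_of_nonneg_left (hW_mem n x).2 (by positivity))
            (hD_norm n x) (norm_nonneg _)
          positivity
      _ = (1/2:ℝ)^n := by ring
  have hTeval : ∀ (x : X) (t : I), T x t = ∑' n, ((1/2 : ℝ)^n * W n x) • D n x t := by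
    intro x t
    have h1 := (ContinuousMap.evalCLM ℝ t).map_tsum (hsumT x)
    have h2 : ∀ p : C(I, Fin m → ℝ), (ContinuousMap.evalCLM ℝ t) p = p t := fun p => rfl
    rw [hT_def]
    rw [← h2, h1]
    refine tsum_congr fun n => ?_
    rw [map_smul, h2]
  -- the final map
  refine ⟨⟨fun x => (Mp x * P x) • T x,
    ((hMp_cont.mul P.continuous).smul hT_cont)⟩, ?_, ?_, ?_⟩
  · intro x
    simp only [ContinuousMap.coe_mk, ContinuousMap.smul_apply]
    rw [hTeval x 0]
    have : ∀ n : ℕ, ((1/2 : ℝ)^n * W n x) • D n x 0 = 0 := by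
      intro n; rw [hD_zero n x, smul_zero]
    rw [tsum_congr this, tsum_zero, smul_zero]
  · intro x
    simp only [ContinuousMap.coe_mk, ContinuousMap.smul_apply]
    rw [hTeval x 1]
    have : ∀ n : ℕ, ((1/2 : ℝ)^n * W n x) • D n x 1 = 0 := by
      intro n; rw [hD_one n x, smul_zero]
    rw [tsum_congr this, tsum_zero, smul_zero]
  · intro x
    simp only [ContinuousMap.coe_mk]
    -- weights on F
    set v : ℕ → ℝ := fun n => (sF x)⁻¹ * ((1/2 : ℝ)^n * w n x) with hv_def
    have hv_nonneg : ∀ n, 0 ≤ v n := fun n =>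
      mul_nonneg (inv_nonneg.mpr (hsF_pos x).le) (mul_nonneg (by positivity) (hw_mem n x).1)
    have hv_summ : Summable v := (hsummw x).mul_left _
    have hv_sum : ∑' n, v n = 1 := by
      rw [hv_def, tsum_mul_left, inv_mul_cancel₀ (hsF_pos x).ne']
    set Q : ℕ → C(I, Fin m → ℝ) := fun n => bpath n (samples n (Φ x)) with hQ_def
    have hQ_norm : ∀ n, ‖Q n‖ ≤ ‖Φ x‖ := fun n =>
      norm_bpath_le _ (norm_nonneg _) (fun k => norm_samples_le n (Φ x) k)
    have hQsum : Summable (fun n => v n • Q n) := by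
      apply Summable.of_norm_bounded (hv_summ.mul_right _)
      intro n
      rw [norm_smul_cm, abs_of_nonneg (hv_nonneg n)]
      exact mul_le_mul_of_nonneg_left (hQ_norm n) (hv_nonneg n)
    set u : ℕ → ℝ := fun n => (1/2 : ℝ)^n * w n x with hu_def
    have hu_nonneg : ∀ n, 0 ≤ u n := fun n => mul_nonneg (by positivity) (hw_mem n x).1
    have husum : Summable (fun n => u n • Q n) := by
      apply Summable.of_norm_bounded (hgeo.mul_right _)
      intro n
      rw [norm_smul_cm, abs_of_nonneg (hu_nonneg n)]
      calc u n * ‖Q n‖ ≤ u n * ‖Φ x‖ :=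
            mul_le_mul_of_nonneg_left (hQ_norm n) (hu_nonneg n)
        _ ≤ (1/2 : ℝ)^n * ‖Φ x‖ := by
            apply mul_le_mul_of_nonneg_right _ (norm_nonneg _)
            rw [hu_def]
            calc (1/2 : ℝ)^n * w n x ≤ (1/2 : ℝ)^n * 1 :=
                  mul_le_mul_of_nonneg_left (hw_mem n x).2 (by positivity)
              _ = (1/2 : ℝ)^n := mul_one _
    -- rewrite c x as a convex combination of the Q n
    have hcx : (Mp (x:X) * P (x:X)) • T (x:X) = ∑' n, v n • Q n := by
      have hterm : ∀ n : ℕ,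
          ((1/2 : ℝ)^n * W n (x:X)) • D n (x:X) = (Mp (x:X))⁻¹ • (u n • Q n) := by
        intro n
        rw [hWF n x, hDF n x, hu_def]
        rw [smul_comm]
      have hT1 : T (x:X) = (Mp (x:X))⁻¹ • ∑' n, u n • Q n := by
        simp only [hT_def]
        rw [tsum_congr hterm, Summable.tsum_const_smul _ husum]
      have hv2 : ∀ n, v n • Q n = (sF x)⁻¹ • (u n • Q n) := by
        intro n
        rw [hv_def, hu_def, smul_smul]
      rw [hT1, tsum_congr hv2, Summable.tsum_const_smul _ husum, hPF x]
      have hsc : (Mp (x:X) * (sF x)⁻¹) * (Mp (x:X))⁻¹ = (sF x)⁻¹ := by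
        rw [mul_assoc, mul_comm ((sF x)⁻¹), ← mul_assoc,
          mul_inv_cancel₀ (hMp_pos (x:X)).ne', one_mul]
      calc (Mp (x:X) * (sF x)⁻¹) • (Mp (x:X))⁻¹ • (∑' n, u n • Q n)
          = ((Mp (x:X) * (sF x)⁻¹) * (Mp (x:X))⁻¹) • (∑' n, u n • Q n) := smul_smul _ _ _
        _ = (sF x)⁻¹ • (∑' n, u n • Q n) := by rw [hsc]
    rw [hcx]
    -- the estimate
    have hΦrep : Φ x = ∑' n, v n • Φ x := by
      rw [Summable.tsum_smul_const hv_summ, hv_sum, one_smul]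
    have hQmix : Summable (fun n => v n • Φ x) := by
      apply Summable.of_norm_bounded (hv_summ.mul_right _)
      intro n
      rw [norm_smul_cm, abs_of_nonneg (hv_nonneg n)]
    have hεle : ∀ n, ‖Q n - Φ x‖ ≤ 2 * ‖Φ x‖ := by
      intro n
      calc ‖Q n - Φ x‖ ≤ ‖Q n‖ + ‖Φ x‖ := norm_sub_le _ _
        _ ≤ ‖Φ x‖ + ‖Φ x‖ := add_le_add_left (hQ_norm n) _
        _ = 2 * ‖Φ x‖ := by ring
    have hsumnorm : Summable (fun n => ‖v n • (Q n - Φ x)‖) := by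
      apply Summable.of_nonneg_of_le (fun n => norm_nonneg _) _ (hv_summ.mul_right (2 * ‖Φ x‖))
      intro n
      rw [norm_smul_cm, abs_of_nonneg (hv_nonneg n)]
      exact mul_le_mul_of_nonneg_left (hεle n) (hv_nonneg n)
    have key : (∑' n, v n • Q n) - Φ x = ∑' n, v n • (Q n - Φ x) :=
      calc (∑' n, v n • Q n) - Φ x
          = (∑' n, v n • Q n) - (∑' n, v n • Φ x) := by conv_lhs => rw [hΦrep]
        _ = ∑' n, (v n • Q n - v n • Φ x) := (Summable.tsum_sub hQsum hQmix).symm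
        _ = ∑' n, v n • (Q n - Φ x) := tsum_congr fun n => (smul_sub (v n) (Q n) (Φ x)).symm
    rw [dist_eq_norm, key]
    calc ‖∑' n, v n • (Q n - Φ x)‖ ≤ ∑' n, ‖v n • (Q n - Φ x)‖ := norm_tsum_le_tsum_norm hsumnorm
      _ ≤ ∑' n, v n * δ x := by
          apply Summable.tsum_le_tsum _ hsumnorm (hv_summ.mul_right _)
          intro n
          rw [norm_smul_cm, abs_of_nonneg (hv_nonneg n)]
          rcases eq_or_lt_of_le (hw_mem n x).1 with hw0 | hwpos
          · have hv0 : v n = 0 := by rw [hv_def]; simp [← hw0]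
            rw [hv0]
            simp
          · apply mul_le_mul_of_nonneg_left _ (hv_nonneg n)
            have hεδ := hw_pos_imp n x hwpos
            calc ‖Q n - Φ x‖ = dist (Q n) (Φ x) := (dist_eq_norm _ _).symm
              _ = ε n x := rfl
              _ ≤ δ x := hεδ
      _ = δ x := by
          rw [tsum_mul_right, hv_sum, one_mul]

end HEPaux

open HEPaux in
set_option maxHeartbeats 1000000 in
/-- Homotopy extension lemma for maps into a Euclidean neighborhood retract:
if `X` is normal, `F ⊆ X` is closed, `Y` is an ENR, `f₀ : F → Y` and
`g : X → Y` are continuous with `f₀` homotopic to `g|_F`, then `f₀` extends to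
a continuous map `f : X → Y` homotopic to `g`. -/
theorem homotopy_extension_into_ENR (X Y : Type*)
    [TopologicalSpace X] [NormalSpace X] [TopologicalSpace Y]
    (hENR : ∃ (m : ℕ) (U : Set (Fin m → ℝ)) (e : Y → (Fin m → ℝ)) (r : U → Y),
      IsOpen U ∧ Topology.IsEmbedding e ∧ Set.range e ⊆ U ∧ Continuous r ∧
      ∀ (y : Y) (h : e y ∈ U), r ⟨e y, h⟩ = y)
    (F : Set X) (hF : IsClosed F)
    (f₀ : C(F, Y)) (g : C(X, Y))
    (h : f₀.Homotopic (g.comp ⟨Subtype.val, continuous_subtype_val⟩)) :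
    ∃ f : C(X, Y), (∀ x : F, f x = f₀ x) ∧ f.Homotopic g := by
  classical
  obtain ⟨m, U, e, r, hUo, he, heU, hrc, hre⟩ := hENR
  obtain ⟨H⟩ := h
  have hec : Continuous e := he.continuous
  -- Tietze extension of `e ∘ f₀`
  obtain ⟨ψ, hψ⟩ := ContinuousMap.exists_restrict_eq (Y := Fin m → ℝ) hF
    ⟨fun x => e (f₀ x), hec.comp f₀.continuous⟩
  have hψF : ∀ x : F, ψ x = e (f₀ x) := by
    intro x
    have h1 : ψ.restrict F x = e (f₀ x) := by rw [hψ]; rfl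
    rwa [ContinuousMap.restrict_apply] at h1
  by_cases hne : Uᶜ.Nonempty
  · -- main case : `U` is a proper open subset
    obtain ⟨z0, hz0⟩ := hne
    -- the homotopy paths, as a map into path space
    set β : C(F, C(I, Fin m → ℝ)) := ContinuousMap.curry
      ⟨fun p : F × I => e (H (p.2, p.1)),
        hec.comp (H.toContinuousMap.continuous.comp continuous_swap)⟩ with hβ_def
    have hβ_apply : ∀ (x : F) (t : I), β x t = e (H (t, x)) := fun x t => rfl
    -- the correction paths on `F`
    set Φ : C(F, C(I, Fin m → ℝ)) := ContinuousMap.curry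
      ⟨fun p : F × I =>
          e (H (p.2, p.1)) - ((1 - (p.2 : ℝ)) • ψ p.1 + (p.2 : ℝ) • e (g p.1)),
        by
          apply Continuous.sub
          · exact hec.comp (H.toContinuousMap.continuous.comp continuous_swap)
          · apply Continuous.add
            · exact (continuous_const.sub (continuous_subtype_val.comp
                continuous_snd)).smul (ψ.continuous.comp
                  (continuous_subtype_val.comp continuous_fst))
            · exact (continuous_subtype_val.comp continuous_snd).smul
                (hec.comp (g.continuous.comp (continuous_subtype_val.comp continuous_fst)))⟩
      with hΦ_def
    have hΦ_apply : ∀ (x : F) (t : I),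
        Φ x t = e (H (t, x)) - ((1 - (t : ℝ)) • ψ x + (t : ℝ) • e (g x)) := fun x t => rfl
    have hΦ0 : ∀ x : F, Φ x 0 = 0 := by
      intro x
      rw [hΦ_apply]
      simp [H.apply_zero, hψF x]
    have hΦ1 : ∀ x : F, Φ x 1 = 0 := by
      intro x
      rw [hΦ_apply]
      simp [H.apply_one]
    -- the closed set of "bad" paths
    set S : Set C(I, Fin m → ℝ) := {p | ¬ ∀ t, p t ∈ U} with hS_def
    have hSopen : IsOpen {p : C(I, Fin m → ℝ) | ∀ t, p t ∈ U} := by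
      have h1 := ContinuousMap.isOpen_setOf_mapsTo (isCompact_univ (X := I)) hUo
      convert h1 using 1
      ext p
      simp [Set.mapsTo_univ_iff]
    have hSclosed : IsClosed S := by
      have h1 : S = {p : C(I, Fin m → ℝ) | ∀ t, p t ∈ U}ᶜ := rfl
      rw [h1]
      exact hSopen.isClosed_compl
    have hSne : S.Nonempty := by
      refine ⟨ContinuousMap.const I z0, ?_⟩
      intro hall
      exact hz0 (hall 0)
    have hβS : ∀ x : F, β x ∉ S := by
      intro x hx
      apply hx
      intro t
      rw [hβ_apply]
      exact heU (Set.mem_range_self _)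
    set d : C(F, ℝ) := ⟨fun x => Metric.infDist (β x) S,
      (continuous_infDist_pt S).comp β.continuous⟩ with hd_def
    have hd_pos : ∀ x, 0 < d x := fun x =>
      (hSclosed.notMem_iff_infDist_pos hSne).1 (hβS x)
    -- approximate extension of the correction paths
    obtain ⟨c, hc0, hc1, hcd⟩ := approx_ext hF Φ hΦ0 hΦ1
      ⟨fun x => d x / 2, d.continuous.div_const 2⟩ (fun x => half_pos (hd_pos x))
    -- the global family of paths
    set B : C(X, C(I, Fin m → ℝ)) := ContinuousMap.curry
      ⟨fun p : X × I =>
          ((1 - (p.2 : ℝ)) • ψ p.1 + (p.2 : ℝ) • e (g p.1)) + c p.1 p.2,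
        by
          apply Continuous.add
          · apply Continuous.add
            · exact (continuous_const.sub (continuous_subtype_val.comp
                continuous_snd)).smul (ψ.continuous.comp continuous_fst)
            · exact (continuous_subtype_val.comp continuous_snd).smul
                (hec.comp (g.continuous.comp continuous_fst))
          · exact continuous_eval.comp ((c.continuous.comp continuous_fst).prodMk
              continuous_snd)⟩ with hB_def
    have hB_apply : ∀ (x : X) (t : I),
        B x t = ((1 - (t : ℝ)) • ψ x + (t : ℝ) • e (g x)) + c x t := fun x t => rfl
    have hB0 : ∀ x : X, B x 0 = ψ x := by
      intro x
      rw [hB_apply, hc0]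
      simp
    have hB1 : ∀ x : X, B x 1 = e (g x) := by
      intro x
      rw [hB_apply, hc1]
      simp
    -- on `F`, the paths stay in `U`
    have hBF : ∀ x : F, ∀ t : I, B (x : X) t ∈ U := by
      intro x
      have hsub : B (x : X) - β x = c (x : X) - Φ x := by
        refine ContinuousMap.ext fun t => ?_
        simp only [ContinuousMap.sub_apply, hB_apply, hβ_apply, hΦ_apply, hψF x]
        abel
      have hdist : dist (B (x : X)) (β x) ≤ d x / 2 := by
        rw [dist_eq_norm, hsub, ← dist_eq_norm]
        exact hcd x
      by_contra hbad
      push_neg at hbad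
      obtain ⟨t, ht⟩ := hbad
      have hmem : B (x : X) ∈ S := by
        intro hall
        exact ht (hall t)
      have h1 : d x ≤ dist (β x) (B (x : X)) := Metric.infDist_le_dist_of_mem hmem
      rw [dist_comm] at h1
      have h2 := hdist.trans_lt (by linarith [hd_pos x] : d x / 2 < d x)
      exact absurd (h1.trans_lt (lt_of_le_of_lt hdist (by linarith [hd_pos x]))) (lt_irrefl _)
    -- the open set where the path stays in `U`
    set W : Set X := (⇑B) ⁻¹' {p : C(I, Fin m → ℝ) | ∀ t, p t ∈ U} with hW_def
    have hWopen : IsOpen W := hSopen.preimage B.continuous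
    have hFW : F ⊆ W := by
      intro x hx
      exact hBF ⟨x, hx⟩
    -- Urysohn function
    obtain ⟨u, hu0, hu1, hu01⟩ := exists_continuous_zero_one_of_isClosed
      (isClosed_compl_iff.mpr hWopen) hF
      (Set.disjoint_left.mpr fun x hxc hxF => hxc (hFW hxF))
    -- the reparametrized time
    have hτmem : ∀ p : I × X, (1 - (1 - (p.1 : ℝ)) * u p.2) ∈ I := by
      intro p
      obtain ⟨hu0', hu1'⟩ := hu01 p.2
      obtain ⟨hs0, hs1⟩ := p.1.2
      constructor
      · have : (1 - (p.1 : ℝ)) * u p.2 ≤ 1 :=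
          mul_le_one₀ (by linarith) hu0' hu1'
        linarith
      · have : 0 ≤ (1 - (p.1 : ℝ)) * u p.2 := mul_nonneg (by linarith) hu0'
        linarith
    set τ : I × X → I := fun p => ⟨1 - (1 - (p.1 : ℝ)) * u p.2, hτmem p⟩ with hτ_def
    have hτcont : Continuous τ := by
      apply Continuous.subtype_mk
      exact continuous_const.sub ((continuous_const.sub
        (continuous_subtype_val.comp continuous_fst)).mul (u.continuous.comp continuous_snd))
    -- membership of all relevant path values
    have hmemτ : ∀ p : I × X, B p.2 (τ p) ∈ U := by
      intro p
      by_cases hz : u p.2 = 0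
      · have hτ1 : τ p = 1 := by
          apply Subtype.ext
          simp [hτ_def, hz]
        rw [hτ1, hB1]
        exact heU (Set.mem_range_self _)
      · have hW : p.2 ∈ W := by
          by_contra hnW
          exact hz (hu0 hnW)
        exact hW (τ p)
    -- the homotopy
    set K : C(I × X, Y) := ⟨fun p => r ⟨B p.2 (τ p), hmemτ p⟩,
      hrc.comp (Continuous.subtype_mk (continuous_eval.comp
        ((B.continuous.comp continuous_snd).prodMk hτcont)) _)⟩ with hK_def
    set f : C(X, Y) := ⟨fun x => K (0, x),
      K.continuous.comp (continuous_const.prodMk continuous_id)⟩ with hf_def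
    have hfF : ∀ x : F, f x = f₀ x := by
      intro x
      have hux : u (x : X) = 1 := hu1 x.2
      have hτ0 : τ (0, (x : X)) = 0 := by
        apply Subtype.ext
        simp [hτ_def, hux]
      have hval : B (x : X) (τ (0, (x : X))) = e (f₀ x) := by
        rw [hτ0, hB0, hψF x]
      show r ⟨B (x : X) (τ (0, (x : X))), hmemτ _⟩ = f₀ x
      have hsub : (⟨B (x : X) (τ (0, (x : X))), hmemτ _⟩ : U)
          = ⟨e (f₀ x), heU (Set.mem_range_self _)⟩ := Subtype.ext hval
      rw [hsub, hre]
    refine ⟨f, hfF, ?_⟩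
    refine ⟨⟨K, fun x => rfl, fun x => ?_⟩⟩
    have hτ1 : τ (1, x) = 1 := by
      apply Subtype.ext
      simp [hτ_def]
    show r ⟨B x (τ (1, x)), hmemτ _⟩ = g x
    have hval : B x (τ (1, x)) = e (g x) := by rw [hτ1, hB1]
    have hsub : (⟨B x (τ (1, x)), hmemτ _⟩ : U)
        = ⟨e (g x), heU (Set.mem_range_self _)⟩ := Subtype.ext hval
    rw [hsub, hre]
  · -- easy case : `U = univ`
    have hU : ∀ v : Fin m → ℝ, v ∈ U := by
      intro v
      by_contra hv
      exact hne ⟨v, hv⟩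
    refine ⟨⟨fun x => r ⟨ψ x, hU _⟩, hrc.comp (ψ.continuous.subtype_mk _)⟩, ?_, ?_⟩
    · intro x
      show r ⟨ψ (x : X), hU _⟩ = f₀ x
      have hsub : (⟨ψ (x : X), hU _⟩ : U) = ⟨e (f₀ x), hU _⟩ := Subtype.ext (hψF x)
      rw [hsub, hre]
    · refine ⟨⟨⟨fun p =>
          r ⟨(1 - (p.1 : ℝ)) • ψ p.2 + (p.1 : ℝ) • e (g p.2), hU _⟩, ?_⟩,
        fun x => ?_, fun x => ?_⟩⟩
      · apply hrc.comp
        apply Continuous.subtype_mk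
        apply Continuous.add
        · exact (continuous_const.sub (continuous_subtype_val.comp
            continuous_fst)).smul (ψ.continuous.comp continuous_snd)
        · exact (continuous_subtype_val.comp continuous_fst).smul
            (hec.comp (g.continuous.comp continuous_snd))
      · show r ⟨(1 - ((0:I) : ℝ)) • ψ x + ((0:I) : ℝ) • e (g x), hU _⟩ = _
        have hsub : (⟨(1 - ((0:I) : ℝ)) • ψ x + ((0:I) : ℝ) • e (g x), hU _⟩ : U)
            = ⟨ψ x, hU _⟩ := Subtype.ext (by simp)
        rw [hsub]
        rfl
      · show r ⟨(1 - ((1:I) : ℝ)) • ψ x + ((1:I) : ℝ) • e (g x), hU _⟩ = _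
        have hsub : (⟨(1 - ((1:I) : ℝ)) • ψ x + ((1:I) : ℝ) • e (g x), hU _⟩ : U)
            = ⟨e (g x), hU _⟩ := Subtype.ext (by simp)
        rw [hsub, hre]
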